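/- Let m be a nonzero integer, f(z) = z³ + 1/m³ ∈ ℚ[z] and g₁(z) = z + 1/m. For every n ≥ 1, the numerator in lowest terms of the rational number g₁(f^{2n−1}(0)) is not the cube of an integer. -/

import Mathlib

open Polynomial


open Zsqrtd

lemma sq_vals {a : ℤ} (h : a * a ≤ 1) : a = 0 ∨ a = 1 ∨ a = -1 := by
  have h0 : 0 ≤ a * a := mul_self_nonneg a
  have : a * a = 0 ∨ a * a = 1 := by omega
  rcases this with h | h
  · exact Or.inl (mul_self_eq_zero.mp h)
  · exact Or.inr (mul_self_eq_one_iff.mp h)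

lemma unit_is_cube (u : GaussianInt) (hu : IsUnit u) : ∃ v : GaussianInt, v ^ 3 = u := by
  have hn : u.norm = 1 := (Zsqrtd.norm_eq_one_iff' (by norm_num) u).mpr hu
  rw [Zsqrtd.norm_def] at hn
  obtain ⟨a, b⟩ := u
  simp only at hn
  have hre : a * a + b * b = 1 := by linarith
  have ha : a = 0 ∨ a = 1 ∨ a = -1 := sq_vals (by nlinarith)
  have hb : b = 0 ∨ b = 1 ∨ b = -1 := sq_vals (by nlinarith)
  rcases ha with rfl | rfl | rfl <;> rcases hb with rfl | rfl | rfl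
  · exfalso; simp at hre
  · exact ⟨⟨0,-1⟩, by rw [Zsqrtd.ext_iff]; norm_num [pow_succ, Zsqrtd.re_mul, Zsqrtd.im_mul]⟩
  · exact ⟨⟨0,1⟩, by rw [Zsqrtd.ext_iff]; norm_num [pow_succ, Zsqrtd.re_mul, Zsqrtd.im_mul]⟩
  · exact ⟨⟨1,0⟩, by rw [Zsqrtd.ext_iff]; norm_num [pow_succ, Zsqrtd.re_mul, Zsqrtd.im_mul]⟩
  · exfalso; norm_num at hre
  · exfalso; norm_num at hre
  · exact ⟨⟨-1,0⟩, by rw [Zsqrtd.ext_iff]; norm_num [pow_succ, Zsqrtd.re_mul, Zsqrtd.im_mul]⟩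
  · exfalso; norm_num at hre
  · exfalso; norm_num at hre

lemma odd_sq_mod8 (m : ℤ) (hm : Odd m) : ((m : ZMod 8))^2 = 1 := by
  obtain ⟨t, rfl⟩ := hm
  obtain ⟨s, hs⟩ := Int.even_mul_succ_self t
  have h8 : (8 : ℤ) ∣ (2*t+1)^2 - 1 := ⟨s, by linear_combination 4 * hs⟩
  have := (ZMod.intCast_zmod_eq_zero_iff_dvd ((2*t+1)^2 - 1) 8).mpr h8
  push_cast at this ⊢
  linear_combination this

lemma lebesgue (m k : ℤ) (h : m ^ 2 + 1 = k ^ 3) : m = 0 := by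
  -- m is even
  have hme : Even m := by
    by_contra hodd
    rw [Int.not_even_iff_odd] at hodd
    have h1 : ((m : ZMod 8))^2 = 1 := odd_sq_mod8 m hodd
    have h2 : ((m : ZMod 8))^2 + 1 = ((k : ZMod 8))^3 := by
      have : ((m^2 + 1 : ℤ) : ZMod 8) = ((k^3 : ℤ) : ZMod 8) := by rw [h]
      push_cast at this; exact this
    rw [h1] at h2
    have : ∀ y : ZMod 8, ¬((1:ZMod 8) + 1 = y^3) := by decide
    exact this _ h2
  obtain ⟨w, hw⟩ := hme
  set A : GaussianInt := ⟨m, 1⟩ with hA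
  set B : GaussianInt := ⟨m, -1⟩ with hB
  have castpair : ∀ n : ℤ, (n : GaussianInt) = ⟨n, 0⟩ := fun n =>
    Zsqrtd.ext_iff.mpr ⟨Zsqrtd.re_intCast n, Zsqrtd.im_intCast n⟩
  have hABc : A * B = ((m^2 + 1 : ℤ) : GaussianInt) := by
    rw [castpair, Zsqrtd.ext_iff]
    constructor <;> simp [hA, hB, Zsqrtd.re_mul, Zsqrtd.im_mul] <;> ring
  have hABsq : (A - B)^2 = ((-4 : ℤ) : GaussianInt) := by
    rw [castpair, Zsqrtd.ext_iff]
    constructor <;> simp [hA, hB, pow_two, Zsqrtd.re_mul, Zsqrtd.im_mul]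
  have hcop : IsCoprime A B := by
    refine ⟨B + ((w*w : ℤ) : GaussianInt) * (A - B), -((w*w : ℤ) : GaussianInt) * (A - B), ?_⟩
    have key : (B + ((w*w : ℤ) : GaussianInt) * (A - B)) * A + (-((w*w : ℤ) : GaussianInt) * (A - B)) * B
        = A * B + ((w*w : ℤ) : GaussianInt) * (A - B)^2 := by ring
    rw [key, hABc, hABsq, ← Int.cast_mul, ← Int.cast_add]
    have h1 : m ^ 2 + 1 + w * w * -4 = 1 := by subst hw; ring
    rw [h1, Int.cast_one]
  have hAB : A * B = ((k : ℤ) : GaussianInt) ^ 3 := by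
    rw [hABc, h]; push_cast; ring
  obtain ⟨dd, hdd⟩ := exists_associated_pow_of_mul_eq_pow' hcop hAB
  obtain ⟨u, hu⟩ := hdd
  obtain ⟨v, hv⟩ := unit_is_cube u u.isUnit
  have he : (dd * v) ^ 3 = A := by rw [mul_pow, hv, hu]
  obtain ⟨e, hee⟩ : ∃ e : GaussianInt, e = dd * v := ⟨_, rfl⟩
  rw [← hee] at he
  clear hee hu hv hAB hcop hABsq hABc
  obtain ⟨a, b⟩ := e
  rw [pow_succ, pow_succ, pow_one, Zsqrtd.ext_iff] at he
  simp only [Zsqrtd.re_mul, Zsqrtd.im_mul, hA] at he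
  obtain ⟨hre, him⟩ := he
  have hre' : a^3 - 3*a*b^2 = m := by linear_combination hre
  have him' : b * (3*a^2 - b^2) = 1 := by linear_combination him
  have hb : b = 1 ∨ b = -1 := Int.isUnit_iff.mp (IsUnit.of_mul_eq_one _ him')
  rcases hb with rfl | rfl
  · exfalso
    have h4 : 3*(a*a) = 2 := by linear_combination him'
    have h5 : 0 ≤ a*a := mul_self_nonneg a
    generalize hgen : a*a = t at h4 h5
    omega
  · have h4 : 3*(a*a) = 0 := by linear_combination -him'
    have h5 : a*a = 0 := by linarith
    have ha : a = 0 := mul_self_eq_zero.mp h5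
    subst ha
    linear_combination -hre'


private def Aseq (m : ℤ) : ℕ → ℤ
  | 0 => 0
  | j+1 => (Aseq m j)^3 + m^(3^(j+1) - 3)

-- the orbit values
lemma orbit_eq (m : ℤ) (hm : m ≠ 0) (f : ℚ[X]) (hf : f = X ^ 3 + C (1 / (m : ℚ) ^ 3)) :
    ∀ j : ℕ, (((f.comp ·)^[j] X).eval 0 : ℚ) = (Aseq m j : ℚ) / (m:ℚ)^(3^j) := by
  have hmq : (m : ℚ) ≠ 0 := Int.cast_ne_zero.mpr hm
  intro j
  induction j with
  | zero => simp [Aseq]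
  | succ j ih =>
    rw [Function.iterate_succ_apply', Polynomial.eval_comp, ih, hf]
    have h3 : 3 ≤ 3^(j+1) := by
      calc 3 = 3^1 := rfl
      _ ≤ 3^(j+1) := Nat.pow_le_pow_right (by norm_num) (by omega)
    have hsplit : 3^(j+1) = (3^(j+1) - 3) + 3 := by omega
    have hmul : 3^j * 3 = 3^(j+1) := (pow_succ 3 j).symm
    have hA : (Aseq m (j+1) : ℚ) = (Aseq m j : ℚ)^3 + (m:ℚ)^(3^(j+1) - 3) := by
      show ((((Aseq m j)^3 + m^(3^(j+1) - 3) : ℤ)) : ℚ) = _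
      push_cast; ring
    rw [hA]
    rw [hsplit, pow_add]
    simp only [eval_add, eval_pow, eval_X, eval_C]
    rw [div_pow, ← pow_mul, hmul, hsplit, pow_add]
    have hQ : (m:ℚ)^(3^(j+1) - 3) ≠ 0 := pow_ne_zero _ hmq
    field_simp
    try ring
    rw [Nat.add_sub_cancel_left]; ring


-- Aseq ≡ 1 mod m for j ≥ 1
lemma Aseq_mod_m (m : ℤ) : ∀ j : ℕ, 1 ≤ j → Aseq m j ≡ 1 [ZMOD m] := by
  intro j
  induction j with
  | zero => omega
  | succ j ih =>
    intro _
    show (Aseq m j)^3 + m^(3^(j+1) - 3) ≡ 1 [ZMOD m]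
    rcases Nat.eq_zero_or_pos j with rfl | hj
    · norm_num [Aseq]
    · have h1 : Aseq m j ≡ 1 [ZMOD m] := ih hj
      have h2 : (Aseq m j)^3 ≡ 1^3 [ZMOD m] := h1.pow 3
      have hE : 1 ≤ 3^(j+1) - 3 := by
        have : 3^2 ≤ 3^(j+1) := Nat.pow_le_pow_right (by norm_num) (by omega)
        omega
      have h3 : m^(3^(j+1) - 3) ≡ 0 [ZMOD m] :=
        (dvd_pow_self m (by omega : 3^(j+1) - 3 ≠ 0)).modEq_zero_int
      calc (Aseq m j)^3 + m^(3^(j+1) - 3) ≡ 1^3 + 0 [ZMOD m] := h2.add h3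
        _ = 1 := by ring

-- the key binomial congruence: (c-1)^e ≡ (-1)^e * (1 - e*c)  [mod c^2]
lemma pow_cm1 (c : ℤ) : ∀ e : ℕ, (c-1)^e ≡ (-1)^e * (1 - e*c) [ZMOD c^2] := by
  intro e
  induction e with
  | zero => norm_num
  | succ e ih =>
    have step : (c-1)^e * (c-1) ≡ ((-1)^e * (1 - e*c)) * (c-1) [ZMOD c^2] := ih.mul_right _
    calc (c-1)^(e+1) = (c-1)^e * (c-1) := by rw [pow_succ]
      _ ≡ ((-1)^e * (1 - e*c)) * (c-1) [ZMOD c^2] := step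
      _ ≡ (-1)^(e+1) * (1 - (e+1)*c) [ZMOD c^2] := by
          rw [Int.modEq_iff_dvd]
          refine ⟨(-1)^e * e, ?_⟩
          push_cast
          rw [pow_succ]
          ring

lemma Aseq_mod_c2 (m : ℤ) : ∀ j : ℕ, 1 ≤ j → ∃ e : ℕ, 2*(e:ℤ) = 3^j - 3 ∧ (Even e ↔ Odd j) ∧
    (Odd j → Aseq m j ≡ 1 - e*(m^2+1) [ZMOD (m^2+1)^2]) ∧
    (Even j → Aseq m j ≡ 3*(m^2+1) [ZMOD (m^2+1)^2]) := by
  set c : ℤ := m^2+1 with hc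
  have hcm : m^2 = c - 1 := by rw [hc]; ring
  intro j
  induction j with
  | zero => omega
  | succ j ih =>
    intro _
    rcases Nat.eq_zero_or_pos j with rfl | hj
    · refine ⟨0, by norm_num, by simp, fun _ => ?_, fun h => absurd h (by simp)⟩
      show (0:ℤ)^3 + m^(3^1 - 3) ≡ 1 - (0:ℕ)*c [ZMOD c^2]
      norm_num
    · obtain ⟨e, he, hpar, hodd, heven⟩ := ih hj
      refine ⟨3*e+3, ?_, ?_, ?_, ?_⟩
      · push_cast
        rw [pow_succ]
        push_cast at he
        linarith
      · simp only [Nat.even_iff, Nat.odd_iff] at hpar ⊢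
        omega
      all_goals (
        intro hparj1
        have hjnat : 2*e+3 = 3^j := by
          have h1 : ((2*e+3 : ℕ) : ℤ) = ((3^j : ℕ) : ℤ) := by push_cast; linarith [he]
          exact_mod_cast h1
        have hnat : 3^(j+1) - 3 = 2*(3*e+3) := by
          have h2 : (3:ℕ)^(j+1) = 3^j * 3 := pow_succ 3 j
          omega
        have hpowm : m^(3^(j+1) - 3) = (c-1)^(3*e+3) := by
          rw [hnat, pow_mul, hcm]
        have hstep : Aseq m (j+1) = (Aseq m j)^3 + m^(3^(j+1) - 3) := rfl
        have hbin := pow_cm1 c (3*e+3)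
        rw [hstep, hpowm])
      -- case: j+1 odd, j even
      · have hjeven : Even j := by
          simp only [Nat.even_iff, Nat.odd_iff] at hparj1 ⊢; omega
        have hee : Even (3*e+3) := by
          simp only [Nat.even_iff, Nat.odd_iff] at hpar hparj1 ⊢; omega
        rw [hee.neg_one_pow, one_mul] at hbin
        have h1 : (Aseq m j)^3 ≡ (3*c)^3 [ZMOD c^2] := (heven hjeven).pow 3
        have h2 : (3*c)^3 ≡ 0 [ZMOD c^2] := Int.modEq_zero_iff_dvd.mpr ⟨27*c, by ring⟩
        have hsum := (h1.trans h2).add hbin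
        calc (Aseq m j)^3 + (c-1)^(3*e+3) ≡ 0 + (1 - ((3*e+3 : ℕ) : ℤ)*c) [ZMOD c^2] := hsum
          _ = 1 - ((3*e+3 : ℕ) : ℤ)*c := by ring
      -- case: j+1 even, j odd
      · have hjodd : Odd j := by
          simp only [Nat.even_iff, Nat.odd_iff] at hparj1 ⊢; omega
        have heo : Odd (3*e+3) := by
          simp only [Nat.even_iff, Nat.odd_iff] at hpar hparj1 ⊢; omega
        rw [heo.neg_one_pow] at hbin
        have h1 : (Aseq m j)^3 ≡ (1 - (e:ℤ)*c)^3 [ZMOD c^2] := (hodd hjodd).pow 3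
        have h2 : (1 - (e:ℤ)*c)^3 ≡ 1 - 3*(e:ℤ)*c [ZMOD c^2] := by
          rw [Int.modEq_iff_dvd]
          exact ⟨(e:ℤ)^3*c - 3*(e:ℤ)^2, by ring⟩
        have hsum := (h1.trans h2).add hbin
        calc (Aseq m j)^3 + (c-1)^(3*e+3)
            ≡ (1 - 3*(e:ℤ)*c) + (-1 * (1 - ((3*e+3 : ℕ) : ℤ)*c)) [ZMOD c^2] := hsum
          _ = 3*c := by push_cast; ring

lemma Nprime_mod (m : ℤ) (J : ℕ) (hJodd : Odd J) (hJ1 : 1 ≤ J) :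
    Aseq m J + m^(3^J - 1) ≡ (m^2+1) [ZMOD (m^2+1)^2] := by
  set c : ℤ := m^2+1 with hc
  obtain ⟨e, he, hpar, hodd, _⟩ := Aseq_mod_c2 m J hJ1
  have hA := hodd hJodd
  have hjnat : 2*e+3 = 3^J := by
    have h1 : ((2*e+3 : ℕ) : ℤ) = ((3^J : ℕ) : ℤ) := by push_cast; linarith [he]
    exact_mod_cast h1
  have hnat : 3^J - 1 = 2*(e+1) := by omega
  have hpowm : m^(3^J - 1) = (c-1)^(e+1) := by
    rw [hnat, pow_mul]
    congr 1
    rw [hc]; ring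
  have heo : Odd (e+1) := by
    have hee : Even e := hpar.mpr hJodd
    simp only [Nat.even_iff, Nat.odd_iff] at hee ⊢; omega
  have hbin := pow_cm1 c (e+1)
  rw [heo.neg_one_pow] at hbin
  rw [hpowm]
  have hsum := hA.add hbin
  calc Aseq m J + (c-1)^(e+1)
      ≡ (1 - (e:ℤ)*c) + (-1 * (1 - ((e+1 : ℕ) : ℤ)*c)) [ZMOD c^2] := hsum
    _ = c := by push_cast; ring

lemma Nprime_mod_m (m : ℤ) (J : ℕ) (hJ1 : 1 ≤ J) :
    Aseq m J + m^(3^J - 1) ≡ 1 [ZMOD m] := by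
  have h1 := Aseq_mod_m m J hJ1
  have h3 : (3:ℕ) ≤ 3^J := by
    calc (3:ℕ) = 3^1 := rfl
    _ ≤ 3^J := Nat.pow_le_pow_right (by norm_num) hJ1
  have h2 : m^(3^J - 1) ≡ 0 [ZMOD m] :=
    (dvd_pow_self m (by omega : 3^J - 1 ≠ 0)).modEq_zero_int
  calc Aseq m J + m^(3^J - 1) ≡ 1 + 0 [ZMOD m] := h1.add h2
    _ = 1 := by ring

/-- Let `m` be a nonzero integer, `f(z) = z³ + 1/m³ ∈ ℚ[z]` and `g₁(z) = z + 1/m`.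
For every `n ≥ 1`, the numerator (in lowest terms) of `g₁(f^{2n-1}(0))` is not the
cube of an integer. -/
theorem stmt15 (m : ℤ) (hm : m ≠ 0)
    (f : ℚ[X]) (hf : f = X ^ 3 + C (1 / (m : ℚ) ^ 3))
    (g₁ : ℚ[X]) (hg₁ : g₁ = X + C (1 / (m : ℚ))) :
    ∀ n : ℕ, 1 ≤ n →
      ¬ ∃ k : ℤ, (g₁.eval (((f.comp ·)^[2 * n - 1] X).eval 0)).num = k ^ 3 := by
  intro n hn
  rintro ⟨k, hk⟩
  have hmq : (m : ℚ) ≠ 0 := Int.cast_ne_zero.mpr hm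
  set J : ℕ := 2 * n - 1 with hJ
  have hJ1 : 1 ≤ J := by omega
  have hJodd : Odd J := by simp only [Nat.odd_iff]; omega
  set N : ℤ := Aseq m J + m^(3^J - 1) with hN
  set b : ℤ := m^(3^J) with hb
  have hd1 : (1:ℕ) ≤ 3^J := Nat.one_le_pow _ _ (by norm_num)
  -- the evaluated rational equals N / b
  have hV : g₁.eval (((f.comp ·)^[J] X).eval 0) = (N : ℚ) / ((b : ℤ) : ℚ) := by
    rw [hg₁, eval_add, eval_X, eval_C, orbit_eq m hm f hf J]
    have hsplit : (m:ℚ)^(3^J) = (m:ℚ)^(3^J - 1) * m := by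
      rw [← pow_succ]; congr 1; omega
    rw [hN, hb]
    push_cast
    rw [hsplit]
    have : (m:ℚ)^(3^J - 1) ≠ 0 := pow_ne_zero _ hmq
    field_simp
  rw [hV] at hk
  -- coprimality of N and b
  have hcop_m : IsCoprime m N := by
    obtain ⟨t, ht⟩ := (Nprime_mod_m m J hJ1).dvd
    exact ⟨t, 1, by linear_combination hN - ht⟩
  have hcop_b : IsCoprime b N := hcop_m.pow_left
  have hcopnat : Nat.Coprime N.natAbs b.natAbs :=
    Nat.coprime_comm.mp (Int.isCoprime_iff_gcd_eq_one.mp hcop_b)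
  have hbne : b ≠ 0 := pow_ne_zero _ hm
  -- N is (up to sign) the numerator, hence a cube
  have hNcube : ∃ K : ℤ, N = K ^ 3 := by
    rcases hbne.lt_or_gt with hblt | hbgt
    · have hV2 : ((N:ℤ):ℚ) / ((b:ℤ):ℚ) = ((-N : ℤ):ℚ) / ((-b : ℤ):ℚ) := by
        push_cast
        rw [div_eq_div_iff (by exact_mod_cast hbne) (by exact_mod_cast neg_ne_zero.mpr hbne)]
        ring
      rw [hV2, Rat.num_div_eq_of_coprime (by omega) (by simpa using hcopnat)] at hk
      exact ⟨-k, by linarith [hk]⟩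
    · rw [Rat.num_div_eq_of_coprime hbgt hcopnat] at hk
      exact ⟨k, hk⟩
  obtain ⟨K, hK⟩ := hNcube
  -- N = c * u with c = m^2+1 and u ≡ 1 mod c
  set c : ℤ := m^2 + 1 with hc
  obtain ⟨s, hs⟩ := (Nprime_mod m J hJodd hJ1).dvd
  have hNcu : c * (1 - c*s) = K^3 := by rw [← hK, hN]; linear_combination hs
  have hcopcu : IsCoprime c (1 - c*s) := ⟨s, 1, by ring⟩
  obtain ⟨dd, hdd⟩ := exists_associated_pow_of_mul_eq_pow' hcopcu hNcu
  rcases Int.associated_iff.mp hdd with h | h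
  · exact hm (lebesgue m dd h.symm)
  · exact hm (lebesgue m (-dd) (by linear_combination h - hc))
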